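/- arXiv:1708.02513 — 3 statements merged into one kernel-verified Lean document; each statement's English description precedes it below -/
import Mathlib

section
/- Let ι be a finite index set, let k : ι → ι → ℝ satisfy k i j ≥ 0 whenever i ≠ j, let s : ι → ℝ, and let n : ι → EuclideanSpace ℝ (Fin d) satisfy ‖n i‖ ≥ 1 for all i. Write n̂ i := (‖n i‖)⁻¹ • n i. Then ∑_{i,j} k i j · ((s i)² + (s j)²)/2 · ‖n i − n j‖² ≥ ∑_{i,j} k i j · ((s i)² + (s j)²)/2 · ‖n̂ i − n̂ j‖². -/
private lemma normalize_sq_le {d : ℕ} (a b : EuclideanSpace ℝ (Fin d))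
    (ha : 1 ≤ ‖a‖) (hb : 1 ≤ ‖b‖) :
    ‖(‖a‖)⁻¹ • a - (‖b‖)⁻¹ • b‖ ^ 2 ≤ ‖a - b‖ ^ 2 := by
  have ha0 : (0:ℝ) < ‖a‖ := lt_of_lt_of_le one_pos ha
  have hb0 : (0:ℝ) < ‖b‖ := lt_of_lt_of_le one_pos hb
  have hna : ‖(‖a‖)⁻¹ • a‖ = 1 := by
    rw [norm_smul, norm_inv, norm_norm, inv_mul_cancel₀ ha0.ne']
  have hnb : ‖(‖b‖)⁻¹ • b‖ = 1 := by
    rw [norm_smul, norm_inv, norm_norm, inv_mul_cancel₀ hb0.ne']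
  have h1 : ‖(‖a‖)⁻¹ • a - (‖b‖)⁻¹ • b‖ ^ 2
      = 2 - 2 * ((‖a‖)⁻¹ * (‖b‖)⁻¹ * inner ℝ a b) := by
    rw [norm_sub_sq_real, hna, hnb, real_inner_smul_left, real_inner_smul_right]
    ring
  have h2 : ‖a - b‖ ^ 2 = ‖a‖ ^ 2 + ‖b‖ ^ 2 - 2 * inner ℝ a b := by
    rw [norm_sub_sq_real]; ring
  have ht : inner ℝ a b ≤ ‖a‖ * ‖b‖ := real_inner_le_norm a b
  rw [h1, h2]
  have hinv : (‖a‖)⁻¹ * (‖b‖)⁻¹ = (‖a‖ * ‖b‖)⁻¹ := (mul_inv _ _).symm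
  have hab1 : (1:ℝ) ≤ ‖a‖ * ‖b‖ := by nlinarith
  rw [hinv]
  have hu : (0:ℝ) ≤ 1 - (‖a‖ * ‖b‖)⁻¹ := by
    have : (‖a‖ * ‖b‖)⁻¹ ≤ 1 := inv_le_one_of_one_le₀ hab1
    linarith
  have h3 : inner ℝ a b * (1 - (‖a‖ * ‖b‖)⁻¹) ≤ (‖a‖ * ‖b‖) * (1 - (‖a‖ * ‖b‖)⁻¹) :=
    mul_le_mul_of_nonneg_right ht hu
  have h4 : (‖a‖ * ‖b‖) * (1 - (‖a‖ * ‖b‖)⁻¹) = ‖a‖ * ‖b‖ - 1 := by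
    field_simp
  rw [h4] at h3
  nlinarith [sq_nonneg (‖a‖ - ‖b‖)]

/-- Inequality (4.8) of Lemma 4.2 (nodal form): with nonnegative off-diagonal stiffness
coefficients, replacing nodal director values of norm `≥ 1` by their normalizations
does not increase the discrete Ericksen form. -/
theorem ericksen_form_monotone {d : ℕ} {ι : Type*} [Fintype ι]
    (k : ι → ι → ℝ) (hk : ∀ i j, i ≠ j → 0 ≤ k i j)
    (s : ι → ℝ)
    (n : ι → EuclideanSpace ℝ (Fin d)) (hn : ∀ i, 1 ≤ ‖n i‖) :
    ∑ i, ∑ j, k i j * (((s i) ^ 2 + (s j) ^ 2) / 2) *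
        ‖(‖n i‖)⁻¹ • n i - (‖n j‖)⁻¹ • n j‖ ^ 2 ≤
      ∑ i, ∑ j, k i j * (((s i) ^ 2 + (s j) ^ 2) / 2) * ‖n i - n j‖ ^ 2 := by
  refine Finset.sum_le_sum fun i _ => Finset.sum_le_sum fun j _ => ?_
  rcases eq_or_ne i j with rfl | hij
  · simp
  · have hk' := hk i j hij
    have hs : (0:ℝ) ≤ ((s i) ^ 2 + (s j) ^ 2) / 2 := by positivity
    exact mul_le_mul_of_nonneg_left (normalize_sq_le _ _ (hn i) (hn j))
      (mul_nonneg hk' hs)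
end

section
/- Let ι be a finite index set, let k : ι → ι → ℝ satisfy k i j ≥ 0 whenever i ≠ j, let κ > 0, let s : ι → ℝ, and let n : ι → EuclideanSpace ℝ (Fin d) satisfy ‖n i‖ = 1 for all i. Define u i := (s i) • (n i) and E := (κ/2) ∑_{i,j} k i j (s i − s j)² + (1/2) ∑_{i,j} k i j ((s i)² + (s j)²)/2 · ‖n i − n j‖². Then E ≥ min κ 1 · (1/2) ∑_{i,j} k i j ‖u i − u j‖² and E ≥ min κ 1 · (1/2) ∑_{i,j} k i j (s i − s j)²; in particular E ≥ min κ 1 · max( (1/2) ∑_{i,j} k i j ‖u i − u j‖², (1/2) ∑_{i,j} k i j (s i − s j)² ). -/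
lemma key_pointwise {d : ℕ} (a b : ℝ) (x y : EuclideanSpace ℝ (Fin d))
    (hx : ‖x‖ = 1) (hy : ‖y‖ = 1) :
    ‖a • x - b • y‖ ^ 2 ≤ (a - b) ^ 2 + ((a ^ 2 + b ^ 2) / 2) * ‖x - y‖ ^ 2 := by
  have h1 : ‖a • x - b • y‖ ^ 2 = a ^ 2 - 2 * (a * b * inner ℝ x y) + b ^ 2 := by
    rw [@norm_sub_sq_real, norm_smul, norm_smul, real_inner_smul_left,
      real_inner_smul_right, hx, hy]
    simp [abs_sq]
    ring
  have h2 : ‖x - y‖ ^ 2 = 2 - 2 * inner ℝ x y := by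
    rw [@norm_sub_sq_real, hx, hy]; ring
  have h3 : (inner ℝ x y : ℝ) ≤ 1 := by
    calc (inner ℝ x y : ℝ) ≤ ‖x‖ * ‖y‖ := real_inner_le_norm x y
    _ = 1 := by rw [hx, hy]; ring
  nlinarith [sq_nonneg (a - b)]

/-- Coercivity of the discrete Ericksen energy (Lemma 2.1, nodal form): with
nonnegative off-diagonal stiffness coefficients, `κ > 0`, and unit nodal directors,
the discrete Ericksen energy controls both `∫|∇u_h|²` and `∫|∇s_h|²` (in nodal form),
and hence their maximum, up to the factor `min κ 1`. -/
theorem ericksen_energy_coercive {d : ℕ} {ι : Type*} [Fintype ι]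
    (k : ι → ι → ℝ) (hk : ∀ i j, i ≠ j → 0 ≤ k i j)
    (κ : ℝ) (hκ : 0 < κ) (s : ι → ℝ)
    (n : ι → EuclideanSpace ℝ (Fin d)) (hn : ∀ i, ‖n i‖ = 1) :
    min κ 1 * ((1 / 2) * ∑ i, ∑ j, k i j * ‖s i • n i - s j • n j‖ ^ 2) ≤
        (κ / 2) * (∑ i, ∑ j, k i j * (s i - s j) ^ 2) +
          (1 / 2) * ∑ i, ∑ j, k i j * (((s i) ^ 2 + (s j) ^ 2) / 2) * ‖n i - n j‖ ^ 2 ∧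
      min κ 1 * ((1 / 2) * ∑ i, ∑ j, k i j * (s i - s j) ^ 2) ≤
        (κ / 2) * (∑ i, ∑ j, k i j * (s i - s j) ^ 2) +
          (1 / 2) * ∑ i, ∑ j, k i j * (((s i) ^ 2 + (s j) ^ 2) / 2) * ‖n i - n j‖ ^ 2 ∧
      min κ 1 * max ((1 / 2) * ∑ i, ∑ j, k i j * ‖s i • n i - s j • n j‖ ^ 2)
          ((1 / 2) * ∑ i, ∑ j, k i j * (s i - s j) ^ 2) ≤
        (κ / 2) * (∑ i, ∑ j, k i j * (s i - s j) ^ 2) +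
          (1 / 2) * ∑ i, ∑ j, k i j * (((s i) ^ 2 + (s j) ^ 2) / 2) * ‖n i - n j‖ ^ 2 := by
  -- nonnegativity of each termwise quantity
  have hterm : ∀ i j, 0 ≤ k i j * (s i - s j) ^ 2 := by
    intro i j
    rcases eq_or_ne i j with rfl | hij
    · simp
    · exact mul_nonneg (hk i j hij) (sq_nonneg _)
  have hterm2 : ∀ i j, 0 ≤ k i j * (((s i) ^ 2 + (s j) ^ 2) / 2) * ‖n i - n j‖ ^ 2 := by
    intro i j
    rcases eq_or_ne i j with rfl | hij
    · simp
    · exact mul_nonneg (mul_nonneg (hk i j hij)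
        (by positivity)) (sq_nonneg _)
  have hS1 : 0 ≤ ∑ i, ∑ j, k i j * (s i - s j) ^ 2 :=
    Finset.sum_nonneg fun i _ => Finset.sum_nonneg fun j _ => hterm i j
  have hS2 : 0 ≤ ∑ i, ∑ j, k i j * (((s i) ^ 2 + (s j) ^ 2) / 2) * ‖n i - n j‖ ^ 2 :=
    Finset.sum_nonneg fun i _ => Finset.sum_nonneg fun j _ => hterm2 i j
  have hmin : 0 < min κ 1 := lt_min hκ one_pos
  have hminκ : min κ 1 ≤ κ := min_le_left _ _
  have hmin1 : min κ 1 ≤ 1 := min_le_right _ _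
  -- first inequality
  have hU : ∑ i, ∑ j, k i j * ‖s i • n i - s j • n j‖ ^ 2 ≤
      ∑ i, ∑ j, k i j * (s i - s j) ^ 2 +
      ∑ i, ∑ j, k i j * (((s i) ^ 2 + (s j) ^ 2) / 2) * ‖n i - n j‖ ^ 2 := by
    rw [← Finset.sum_add_distrib]
    refine Finset.sum_le_sum fun i _ => ?_
    rw [← Finset.sum_add_distrib]
    refine Finset.sum_le_sum fun j _ => ?_
    rcases eq_or_ne i j with rfl | hij
    · simp
    · have := key_pointwise (s i) (s j) (n i) (n j) (hn i) (hn j)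
      have hkij := hk i j hij
      nlinarith [this, hkij]
  have h1 : min κ 1 * ((1 / 2) * ∑ i, ∑ j, k i j * ‖s i • n i - s j • n j‖ ^ 2) ≤
      (κ / 2) * (∑ i, ∑ j, k i j * (s i - s j) ^ 2) +
        (1 / 2) * ∑ i, ∑ j, k i j * (((s i) ^ 2 + (s j) ^ 2) / 2) * ‖n i - n j‖ ^ 2 := by
    have hUnn : 0 ≤ ∑ i, ∑ j, k i j * ‖s i • n i - s j • n j‖ ^ 2 :=
      Finset.sum_nonneg fun i _ => Finset.sum_nonneg fun j _ => by
        rcases eq_or_ne i j with rfl | hij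
        · simp
        · exact mul_nonneg (hk i j hij) (sq_nonneg _)
    calc min κ 1 * ((1 / 2) * ∑ i, ∑ j, k i j * ‖s i • n i - s j • n j‖ ^ 2)
        ≤ min κ 1 * ((1 / 2) * (∑ i, ∑ j, k i j * (s i - s j) ^ 2 +
            ∑ i, ∑ j, k i j * (((s i) ^ 2 + (s j) ^ 2) / 2) * ‖n i - n j‖ ^ 2)) := by
          apply mul_le_mul_of_nonneg_left _ hmin.le; linarith
      _ = (min κ 1 / 2) * (∑ i, ∑ j, k i j * (s i - s j) ^ 2) +
            (min κ 1 / 2) * ∑ i, ∑ j, k i j * (((s i) ^ 2 + (s j) ^ 2) / 2) * ‖n i - n j‖ ^ 2 := by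
          ring
      _ ≤ (κ / 2) * (∑ i, ∑ j, k i j * (s i - s j) ^ 2) +
            (1 / 2) * ∑ i, ∑ j, k i j * (((s i) ^ 2 + (s j) ^ 2) / 2) * ‖n i - n j‖ ^ 2 := by
          have e1 : (min κ 1 / 2) * (∑ i, ∑ j, k i j * (s i - s j) ^ 2) ≤ (κ / 2) * (∑ i, ∑ j, k i j * (s i - s j) ^ 2) := by nlinarith [hS1]
          have e2 : (min κ 1 / 2) * (∑ i, ∑ j, k i j * (((s i) ^ 2 + (s j) ^ 2) / 2) * ‖n i - n j‖ ^ 2) ≤ (1 / 2) * (∑ i, ∑ j, k i j * (((s i) ^ 2 + (s j) ^ 2) / 2) * ‖n i - n j‖ ^ 2) := by nlinarith [hS2]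
          linarith
  have h2 : min κ 1 * ((1 / 2) * ∑ i, ∑ j, k i j * (s i - s j) ^ 2) ≤
      (κ / 2) * (∑ i, ∑ j, k i j * (s i - s j) ^ 2) +
        (1 / 2) * ∑ i, ∑ j, k i j * (((s i) ^ 2 + (s j) ^ 2) / 2) * ‖n i - n j‖ ^ 2 := by
    have : min κ 1 * ((1 / 2) * ∑ i, ∑ j, k i j * (s i - s j) ^ 2) ≤
        (κ / 2) * (∑ i, ∑ j, k i j * (s i - s j) ^ 2) := by
      nlinarith [hS1]
    linarith
  exact ⟨h1, h2, by
    rcases max_cases ((1 / 2) * ∑ i, ∑ j, k i j * ‖s i • n i - s j • n j‖ ^ 2)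
      ((1 / 2) * ∑ i, ∑ j, k i j * (s i - s j) ^ 2) with ⟨h, _⟩ | ⟨h, _⟩ <;>
      rw [h] <;> [exact h1; exact h2]⟩
end

section
/- Let (Ω, μ) be a finite measure space, let C, Λ ≥ 0, let a_h : ℕ → Ω → ℝ and a : Ω → ℝ be measurable with 0 ≤ a_h ≤ C pointwise and a_h → a μ-almost everywhere, and let g_h : ℕ → Ω → EuclideanSpace ℝ (Fin d) and g : Ω → EuclideanSpace ℝ (Fin d) be square-integrable with ∫‖g_h‖² dμ ≤ Λ for all h and such that g_h converges weakly to g in L²(μ), i.e. ∫⟪g_h, v⟫ dμ → ∫⟪g, v⟫ dμ for every square-integrable v. Then ∫ a ‖g‖² dμ ≤ liminf_{h→∞} ∫ a_h ‖g_h‖² dμ. -/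
open MeasureTheory Filter
open scoped RealInnerProductSpace ENNReal

section Aux
variable {Ω : Type*} [MeasurableSpace Ω] {μ : Measure Ω} {d : ℕ}

lemma integrable_sq_norm {E : Type*} [NormedAddCommGroup E] {f : Ω → E}
    (hf : MemLp f 2 μ) : Integrable (fun x => ‖f x‖ ^ 2) μ := by
  have h := hf.integrable_norm_rpow two_ne_zero ENNReal.ofNat_ne_top
  have e : ∀ x, ‖f x‖ ^ ((2 : ℝ≥0∞).toReal) = ‖f x‖ ^ 2 := by
    intro x
    rw [ENNReal.toReal_ofNat, show ((2:ℝ)) = ((2:ℕ):ℝ) by norm_num, Real.rpow_natCast]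
  simpa [e] using h

lemma integrable_inner_of_memℒp {f g : Ω → EuclideanSpace ℝ (Fin d)}
    (hf : MemLp f 2 μ) (hg : MemLp g 2 μ) :
    Integrable (fun x => ⟪f x, g x⟫) μ := by
  have h := L2.integrable_inner (𝕜 := ℝ) (hf.toLp f) (hg.toLp g)
  refine h.congr ?_
  filter_upwards [hf.coeFn_toLp, hg.coeFn_toLp] with x h1 h2
  rw [h1, h2]

lemma integrable_mul_of_memℒp {f g : Ω → ℝ}
    (hf : MemLp f 2 μ) (hg : MemLp g 2 μ) :
    Integrable (fun x => f x * g x) μ := by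
  have h := L2.integrable_inner (𝕜 := ℝ) (hf.toLp f) (hg.toLp g)
  refine h.congr ?_
  filter_upwards [hf.coeFn_toLp, hg.coeFn_toLp] with x h1 h2
  rw [h1, h2]
  simp [RCLike.inner_apply, mul_comm]

end Aux

/-- Egorov-based weak lower semicontinuity (Part 1 of Theorem 6.1): if `0 ≤ a_h ≤ C`
converge a.e. to `a`, and `g_h ⇀ g` weakly in `L²(μ)` with `∫‖g_h‖² ≤ Λ`, then
`∫ a‖g‖² ≤ liminf ∫ a_h‖g_h‖²`. -/
theorem weighted_l2_weak_liminf {Ω : Type*} [MeasurableSpace Ω]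
    (μ : Measure Ω) [IsFiniteMeasure μ] {d : ℕ}
    (C Λ : ℝ) (hC : 0 ≤ C) (hΛ : 0 ≤ Λ)
    (ah : ℕ → Ω → ℝ) (a : Ω → ℝ)
    (hah_meas : ∀ h, Measurable (ah h)) (ha_meas : Measurable a)
    (hah_bdd : ∀ h x, 0 ≤ ah h x ∧ ah h x ≤ C)
    (hah_ae : ∀ᵐ x ∂μ, Tendsto (fun h => ah h x) atTop (nhds (a x)))
    (gh : ℕ → Ω → EuclideanSpace ℝ (Fin d)) (g : Ω → EuclideanSpace ℝ (Fin d))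
    (hgh_L2 : ∀ h, MemLp (gh h) 2 μ) (hg_L2 : MemLp g 2 μ)
    (hgh_bdd : ∀ h, ∫ x, ‖gh h x‖ ^ 2 ∂μ ≤ Λ)
    (hweak : ∀ v : Ω → EuclideanSpace ℝ (Fin d), MemLp v 2 μ →
      Tendsto (fun h => ∫ x, ⟪gh h x, v x⟫ ∂μ) atTop (nhds (∫ x, ⟪g x, v x⟫ ∂μ))) :
    ∫ x, a x * ‖g x‖ ^ 2 ∂μ ≤
      liminf (fun h => ∫ x, ah h x * ‖gh h x‖ ^ 2 ∂μ) atTop := by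
  -- a.e. bounds on the limit weight
  have ha_bdd : ∀ᵐ x ∂μ, 0 ≤ a x ∧ a x ≤ C := by
    filter_upwards [hah_ae] with x hx
    exact ⟨ge_of_tendsto' hx fun h => (hah_bdd h x).1,
           le_of_tendsto' hx fun h => (hah_bdd h x).2⟩
  have ha_top : MemLp a ⊤ μ := by
    refine memLp_top_of_bound ha_meas.aestronglyMeasurable C ?_
    filter_upwards [ha_bdd] with x hx
    rw [Real.norm_eq_abs, abs_of_nonneg hx.1]; exact hx.2
  have hag : MemLp (fun x => a x • g x) 2 μ := hg_L2.smul ha_top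
  have hgsq : Integrable (fun x => ‖g x‖ ^ 2) μ := integrable_sq_norm hg_L2
  have hinner : ∀ h, Integrable (fun x => ⟪gh h x, g x⟫) μ := fun h =>
    integrable_inner_of_memℒp (hgh_L2 h) hg_L2
  have hahnorm : ∀ h, ∀ᵐ x ∂μ, ‖ah h x‖ ≤ C := fun h =>
    Eventually.of_forall fun x => by
      rw [Real.norm_eq_abs, abs_of_nonneg (hah_bdd h x).1]; exact (hah_bdd h x).2
  have hiah : ∀ h, Integrable (fun x => ah h x * ⟪gh h x, g x⟫) μ := fun h =>
    (hinner h).bdd_mul (hah_meas h).aestronglyMeasurable (hahnorm h)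
  have hiag : ∀ h, Integrable (fun x => ah h x * ‖g x‖ ^ 2) μ := fun h =>
    hgsq.bdd_mul (hah_meas h).aestronglyMeasurable (hahnorm h)
  have hiagh : ∀ h, Integrable (fun x => ah h x * ‖gh h x‖ ^ 2) μ := fun h =>
    (integrable_sq_norm (hgh_L2 h)).bdd_mul (hah_meas h).aestronglyMeasurable (hahnorm h)
  -- key pointwise inequality integrated
  have key : ∀ h, 2 * (∫ x, ah h x * ⟪gh h x, g x⟫ ∂μ) - (∫ x, ah h x * ‖g x‖ ^ 2 ∂μ)
      ≤ ∫ x, ah h x * ‖gh h x‖ ^ 2 ∂μ := by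
    intro h
    have pt : ∀ x, 0 ≤ ah h x * ‖gh h x‖ ^ 2 - 2 * (ah h x * ⟪gh h x, g x⟫)
        + ah h x * ‖g x‖ ^ 2 := by
      intro x
      have e : ah h x * ‖gh h x - g x‖ ^ 2
          = ah h x * ‖gh h x‖ ^ 2 - 2 * (ah h x * ⟪gh h x, g x⟫) + ah h x * ‖g x‖ ^ 2 := by
        rw [norm_sub_sq_real]; ring
      rw [← e]
      exact mul_nonneg (hah_bdd h x).1 (sq_nonneg _)
    have h0 : (∫ x, 2 * (ah h x * ⟪gh h x, g x⟫) ∂μ)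
        ≤ ∫ x, (ah h x * ‖gh h x‖ ^ 2 + ah h x * ‖g x‖ ^ 2) ∂μ := by
      refine integral_mono ((hiah h).const_mul 2) ((hiagh h).add (hiag h)) fun x => ?_
      have := pt x; dsimp only; linarith
    rw [integral_const_mul, integral_add (hiagh h) (hiag h)] at h0
    linarith
  -- split the weighted inner product
  have i1 : ∀ h, Integrable (fun x => ⟪gh h x, a x • g x⟫) μ := fun h =>
    integrable_inner_of_memℒp (hgh_L2 h) hag
  have i2 : ∀ h, Integrable (fun x => ⟪gh h x, (ah h x - a x) • g x⟫) μ := by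
    intro h
    have e : (fun x => ⟪gh h x, (ah h x - a x) • g x⟫)
        = fun x => ah h x * ⟪gh h x, g x⟫ - ⟪gh h x, a x • g x⟫ := by
      funext x; simp only [real_inner_smul_right]; ring
    rw [e]; exact (hiah h).sub (i1 h)
  have split : ∀ h, ∫ x, ah h x * ⟪gh h x, g x⟫ ∂μ
      = (∫ x, ⟪gh h x, a x • g x⟫ ∂μ) + ∫ x, ⟪gh h x, (ah h x - a x) • g x⟫ ∂μ := by
    intro h
    rw [← integral_add (i1 h) (i2 h)]
    refine integral_congr_ae (Eventually.of_forall fun x => ?_)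
    dsimp only; simp only [real_inner_smul_right]; ring
  -- T1 : weak convergence against a•g
  have hT1 : Tendsto (fun h => ∫ x, ⟪gh h x, a x • g x⟫ ∂μ) atTop
      (nhds (∫ x, a x * ‖g x‖ ^ 2 ∂μ)) := by
    have e : ∫ x, ⟪g x, a x • g x⟫ ∂μ = ∫ x, a x * ‖g x‖ ^ 2 ∂μ :=
      integral_congr_ae (Eventually.of_forall fun x => by
        dsimp only; rw [real_inner_smul_right, real_inner_self_eq_norm_sq])
    exact e ▸ hweak (fun x => a x • g x) hag
  -- D : the error integral, tends to 0
  have hΔ_bdd : ∀ h, ∀ᵐ x ∂μ, |ah h x - a x| ≤ 2 * C := fun h => by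
    filter_upwards [ha_bdd] with x hx
    have h1 := hah_bdd h x
    rw [abs_le]; constructor <;> linarith [hx.1, hx.2, h1.1, h1.2]
  have hΔ_meas : ∀ h, AEStronglyMeasurable (fun x => |ah h x - a x| * ‖g x‖) μ := fun h =>
    ((hah_meas h).sub ha_meas).abs.aestronglyMeasurable.mul hg_L2.1.norm
  have hD0 : Tendsto (fun h => ∫ x, (|ah h x - a x| * ‖g x‖) ^ 2 ∂μ) atTop (nhds 0) := by
    have h := tendsto_integral_of_dominated_convergence
        (F := fun h x => (|ah h x - a x| * ‖g x‖) ^ 2)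
        (f := fun _ => (0 : ℝ)) (bound := fun x => (2 * C) ^ 2 * ‖g x‖ ^ 2)
        (fun h => by
          have := (hΔ_meas h).mul (hΔ_meas h)
          simpa [pow_two, Pi.mul_def] using this)
        (hgsq.const_mul ((2 * C) ^ 2))
        (fun h => by
          filter_upwards [hΔ_bdd h] with x hx
          rw [Real.norm_eq_abs,
            abs_of_nonneg (pow_nonneg (mul_nonneg (abs_nonneg _) (norm_nonneg _)) 2),
            mul_pow]
          gcongr)
        (by
          filter_upwards [hah_ae] with x hx
          have := (((hx.sub_const (a x)).abs.mul_const ‖g x‖).pow 2)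
          simpa using this)
    simpa using h
  -- Cauchy–Schwarz bound for the error term
  have hT2bound : ∀ h, ‖∫ x, ⟪gh h x, (ah h x - a x) • g x⟫ ∂μ‖
      ≤ Real.sqrt Λ * Real.sqrt (∫ x, (|ah h x - a x| * ‖g x‖) ^ 2 ∂μ) := by
    intro h
    have hM1 : MemLp (fun x => ‖gh h x‖) 2 μ := (hgh_L2 h).norm
    have hM2 : MemLp (fun x => |ah h x - a x| * ‖g x‖) 2 μ := by
      have hφ : MemLp (fun x => |ah h x - a x|) ⊤ μ :=
        memLp_top_of_bound ((hah_meas h).sub ha_meas).abs.aestronglyMeasurable (2 * C)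
          (by filter_upwards [hΔ_bdd h] with x hx
              rwa [Real.norm_eq_abs, abs_abs])
      exact hg_L2.norm.smul hφ
    have hRHSint : Integrable (fun x => ‖gh h x‖ * (|ah h x - a x| * ‖g x‖)) μ :=
      integrable_mul_of_memℒp hM1 hM2
    have step1 : ‖∫ x, ⟪gh h x, (ah h x - a x) • g x⟫ ∂μ‖
        ≤ ∫ x, ‖gh h x‖ * (|ah h x - a x| * ‖g x‖) ∂μ := by
      refine (norm_integral_le_integral_norm _).trans ?_
      refine integral_mono_of_nonneg (Eventually.of_forall fun x => norm_nonneg _) hRHSint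
        (Eventually.of_forall fun x => ?_)
      calc ‖⟪gh h x, (ah h x - a x) • g x⟫‖
          ≤ ‖gh h x‖ * ‖(ah h x - a x) • g x‖ := norm_inner_le_norm _ _
        _ = ‖gh h x‖ * (|ah h x - a x| * ‖g x‖) := by
            rw [norm_smul, Real.norm_eq_abs]
    have hpq : Real.HolderConjugate 2 2 := Real.HolderConjugate.two_two
    have h2 : (ENNReal.ofReal (2:ℝ)) = 2 := by
      rw [ENNReal.ofReal_ofNat]
    have step2 : ∫ x, ‖gh h x‖ * (|ah h x - a x| * ‖g x‖) ∂μ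
        ≤ (∫ x, ‖gh h x‖ ^ (2:ℝ) ∂μ) ^ ((1:ℝ)/2)
          * (∫ x, (|ah h x - a x| * ‖g x‖) ^ (2:ℝ) ∂μ) ^ ((1:ℝ)/2) :=
      integral_mul_le_Lp_mul_Lq_of_nonneg hpq
        (Eventually.of_forall fun x => norm_nonneg _)
        (Eventually.of_forall fun x => mul_nonneg (abs_nonneg _) (norm_nonneg _))
        (by rw [h2]; exact hM1) (by rw [h2]; exact hM2)
    have erw1 : (∫ x, ‖gh h x‖ ^ (2:ℝ) ∂μ) = ∫ x, ‖gh h x‖ ^ 2 ∂μ :=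
      integral_congr_ae (Eventually.of_forall fun x => by
        dsimp only; rw [show ((2:ℝ)) = ((2:ℕ):ℝ) by norm_num, Real.rpow_natCast])
    have erw2 : (∫ x, (|ah h x - a x| * ‖g x‖) ^ (2:ℝ) ∂μ)
        = ∫ x, (|ah h x - a x| * ‖g x‖) ^ 2 ∂μ :=
      integral_congr_ae (Eventually.of_forall fun x => by
        dsimp only; rw [show ((2:ℝ)) = ((2:ℕ):ℝ) by norm_num, Real.rpow_natCast])
    rw [erw1, erw2, ← Real.sqrt_eq_rpow, ← Real.sqrt_eq_rpow] at step2
    refine step1.trans (step2.trans ?_)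
    have : Real.sqrt (∫ x, ‖gh h x‖ ^ 2 ∂μ) ≤ Real.sqrt Λ :=
      Real.sqrt_le_sqrt (hgh_bdd h)
    exact mul_le_mul_of_nonneg_right this (Real.sqrt_nonneg _)
  have hT2 : Tendsto (fun h => ∫ x, ⟪gh h x, (ah h x - a x) • g x⟫ ∂μ) atTop (nhds 0) := by
    refine squeeze_zero_norm hT2bound ?_
    have hs : Tendsto (fun h => Real.sqrt (∫ x, (|ah h x - a x| * ‖g x‖) ^ 2 ∂μ))
        atTop (nhds 0) := by
      have := (Real.continuous_sqrt.tendsto 0).comp hD0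
      simpa [Function.comp_def] using this
    have := hs.const_mul (Real.sqrt Λ)
    simpa using this
  -- T3 : dominated convergence for the weights against ‖g‖²
  have hT3 : Tendsto (fun h => ∫ x, ah h x * ‖g x‖ ^ 2 ∂μ) atTop
      (nhds (∫ x, a x * ‖g x‖ ^ 2 ∂μ)) := by
    refine tendsto_integral_of_dominated_convergence (fun x => C * ‖g x‖ ^ 2)
      (fun h => (hiag h).1) (hgsq.const_mul C) ?_ ?_
    · intro h
      refine Eventually.of_forall fun x => ?_
      rw [Real.norm_eq_abs, abs_of_nonneg (mul_nonneg (hah_bdd h x).1 (sq_nonneg _))]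
      exact mul_le_mul_of_nonneg_right (hah_bdd h x).2 (sq_nonneg _)
    · filter_upwards [hah_ae] with x hx
      exact hx.mul_const _
  -- assemble the lower bound sequence c
  set L := ∫ x, a x * ‖g x‖ ^ 2 ∂μ with hL
  set c : ℕ → ℝ := fun h => 2 * ((∫ x, ⟪gh h x, a x • g x⟫ ∂μ)
      + ∫ x, ⟪gh h x, (ah h x - a x) • g x⟫ ∂μ) - ∫ x, ah h x * ‖g x‖ ^ 2 ∂μ with hc_def
  have hc : Tendsto c atTop (nhds L) := by
    have := ((hT1.add hT2).const_mul 2).sub hT3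
    have e : 2 * (L + 0) - L = L := by ring
    rw [e] at this
    exact this
  have hcb : ∀ h, c h ≤ ∫ x, ah h x * ‖gh h x‖ ^ 2 ∂μ := by
    intro h
    have := key h
    rw [split h] at this
    simpa [hc_def] using this
  have hb_ub : ∀ h, ∫ x, ah h x * ‖gh h x‖ ^ 2 ∂μ ≤ C * Λ := by
    intro h
    calc ∫ x, ah h x * ‖gh h x‖ ^ 2 ∂μ ≤ ∫ x, C * ‖gh h x‖ ^ 2 ∂μ := by
          refine integral_mono (hiagh h) ((integrable_sq_norm (hgh_L2 h)).const_mul C)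
            (fun x => mul_le_mul_of_nonneg_right (hah_bdd h x).2 (sq_nonneg _))
      _ = C * ∫ x, ‖gh h x‖ ^ 2 ∂μ := integral_const_mul _ _
      _ ≤ C * Λ := mul_le_mul_of_nonneg_left (hgh_bdd h) hC
  have hfinal : liminf c atTop ≤ liminf (fun h => ∫ x, ah h x * ‖gh h x‖ ^ 2 ∂μ) atTop :=
    liminf_le_liminf (Eventually.of_forall hcb) hc.isBoundedUnder_ge
      (isCoboundedUnder_ge_of_le atTop hb_ub)
  rw [← hc.liminf_eq]
  exact hfinal
end
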